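/- Let λ₁, …, λ₅ : ℂ → ℂ be functions analytic at 0 with λⱼ(0) = 0 for all j, and define v¹(ε) = (λ₁(ε), λ₃(ε), λ₂(ε)λ₅(ε)) ∈ ℂ³ and v²(ε) = (λ₁(ε)+λ₃(ε)+λ₁(ε)λ₂(ε), λ₅(ε), λ₃(ε)λ₄(ε)) ∈ ℂ³. Suppose there are nonzero vectors c¹ = (c₁¹, c₂¹, c₃¹) and c² = (c₁², c₂², c₃²) in ℂ³ and scalar functions μ, ν defined for small ε ≠ 0 such that μ(ε)·v¹(ε) → c¹ and ν(ε)·v²(ε) → c² as ε → 0. Then at least one of the following holds: (i) c₁² = c₃² = 0; (ii) c₁¹ + c₂¹ = 0 and c₃¹ = 0; (iii) c₃¹ = 0 and c₃² = 0. In other words, the exceptional divisor of the blow-up of the product of Bautin ideals 𝓑₁ × 𝓑₂ is contained in the union of these three subsets of ℙ² × ℙ². -/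

import Mathlib

open Filter

open Topology

noncomputable def AnalyticAt.order {f : ℂ → ℂ} {z₀ : ℂ} (_ : AnalyticAt ℂ f z₀) : ℕ∞ :=
  analyticOrderAt f z₀

lemma AnalyticAt.order_eq_top_iff {f : ℂ → ℂ} {z₀ : ℂ} (hf : AnalyticAt ℂ f z₀) :
    hf.order = ⊤ ↔ ∀ᶠ z in 𝓝 z₀, f z = 0 := analyticOrderAt_eq_top

lemma AnalyticAt.order_eq_nat_iff {f : ℂ → ℂ} {z₀ : ℂ} (hf : AnalyticAt ℂ f z₀) (n : ℕ) :
    hf.order = n ↔ ∃ g : ℂ → ℂ, AnalyticAt ℂ g z₀ ∧ g z₀ ≠ 0 ∧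
      ∀ᶠ z in 𝓝 z₀, f z = (z - z₀) ^ n • g z := hf.analyticOrderAt_eq_natCast



lemma BD.exists_nat (x : ℕ∞) (h : x ≠ ⊤) : ∃ n : ℕ, x = (n : ℕ∞) := by
  cases x with
  | top => simp at h
  | coe n => exact ⟨n, rfl⟩

-- rep extraction: order ≥ m gives factorization z^m * w
lemma BD.rep_of_le_order {f : ℂ → ℂ} (hf : AnalyticAt ℂ f 0) (m : ℕ)
    (h : (m : ℕ∞) ≤ hf.order) :
    ∃ w : ℂ → ℂ, AnalyticAt ℂ w 0 ∧ ∀ᶠ z in 𝓝 (0:ℂ), f z = z ^ m * w z := by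
  rcases eq_or_ne hf.order ⊤ with ht | ht
  · refine ⟨0, analyticAt_const, ?_⟩
    filter_upwards [hf.order_eq_top_iff.mp ht] with z hz
    simp [hz]
  · obtain ⟨n, hn⟩ := BD.exists_nat _ ht
    obtain ⟨u, hu, hu0, hfu⟩ := (hf.order_eq_nat_iff n).mp hn
    have hmn : m ≤ n := by exact_mod_cast (Nat.cast_le (α := ℕ∞)).mp (h.trans_eq hn)
    refine ⟨fun z => z ^ (n - m) * u z, ((analyticAt_id.pow _).mul hu), ?_⟩
    filter_upwards [hfu] with z hz
    rw [hz, smul_eq_mul, sub_zero, ← mul_assoc, ← pow_add, Nat.add_sub_cancel' hmn]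

-- converse: factorization z^m * w gives order ≥ m
lemma BD.le_order_of_rep {f : ℂ → ℂ} (hf : AnalyticAt ℂ f 0) (m : ℕ)
    (w : ℂ → ℂ) (hw : AnalyticAt ℂ w 0) (hr : ∀ᶠ z in 𝓝 (0:ℂ), f z = z ^ m * w z) :
    (m : ℕ∞) ≤ hf.order := by
  by_contra hlt
  push_neg at hlt
  obtain ⟨n, hn⟩ := BD.exists_nat _ (hlt.trans_le le_top).ne
  obtain ⟨u, hu, hu0, hfu⟩ := (hf.order_eq_nat_iff n).mp hn
  have hnm : n < m := by exact_mod_cast (Nat.cast_lt (α := ℕ∞)).mp (hn ▸ hlt)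
  -- u z = z^(m-n) * w z for z ≠ 0 near 0
  have hev : ∀ᶠ z in 𝓝[≠] (0:ℂ), u z = z ^ (m - n) * w z := by
    filter_upwards [eventually_nhdsWithin_of_eventually_nhds hfu,
      eventually_nhdsWithin_of_eventually_nhds hr, self_mem_nhdsWithin] with z h1 h2 hz
    have hz0 : (z:ℂ) ≠ 0 := hz
    have : z ^ n * u z = z ^ m * w z := by
      rw [← h2, h1, smul_eq_mul, sub_zero]
    have hm : z ^ m = z ^ n * z ^ (m - n) := by
      rw [← pow_add, Nat.add_sub_cancel' hnm.le]
    rw [hm, mul_assoc] at this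
    exact mul_left_cancel₀ (pow_ne_zero n hz0) this
  have h1 : Tendsto u (𝓝[≠] (0:ℂ)) (𝓝 (u 0)) :=
    (hu.continuousAt.tendsto).mono_left nhdsWithin_le_nhds
  have h2 : Tendsto u (𝓝[≠] (0:ℂ)) (𝓝 0) := by
    have hp : Tendsto (fun z : ℂ => z ^ (m - n)) (𝓝 (0:ℂ)) (𝓝 0) := by
      have h0 : (0:ℂ) ^ (m - n) = 0 := zero_pow (Nat.sub_ne_zero_of_lt hnm)
      simpa [h0] using ((continuous_pow (m - n)).tendsto (0:ℂ))
    have : Tendsto (fun z : ℂ => z ^ (m - n) * w z) (𝓝 (0:ℂ)) (𝓝 0) := by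
      simpa using hp.mul hw.continuousAt.tendsto
    exact (this.mono_left nhdsWithin_le_nhds).congr' (hev.mono fun z hz => hz.symm)
  exact hu0 (tendsto_nhds_unique h1 h2)

-- order ≥ 1 if f 0 = 0
lemma BD.one_le_order {f : ℂ → ℂ} (hf : AnalyticAt ℂ f 0) (h0 : f 0 = 0) :
    (1 : ℕ∞) ≤ hf.order := by
  rcases eq_or_ne hf.order ⊤ with ht | ht
  · simp [ht]
  obtain ⟨n, hn⟩ := BD.exists_nat _ ht
  obtain ⟨u, hu, hu0, hfu⟩ := (hf.order_eq_nat_iff n).mp hn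
  rcases Nat.eq_zero_or_pos n with rfl | hp
  · exfalso
    have := hfu.self_of_nhds
    simp [h0] at this
    exact hu0 this.symm
  · rw [hn]; exact Nat.one_le_cast.mpr hp

-- order of a product
lemma BD.order_mul {f g : ℂ → ℂ} (hf : AnalyticAt ℂ f 0) (hg : AnalyticAt ℂ g 0) :
    (hf.mul hg).order = hf.order + hg.order := by
  rcases eq_or_ne hf.order ⊤ with htf | htf
  · rw [htf, top_add, AnalyticAt.order_eq_top_iff]
    filter_upwards [hf.order_eq_top_iff.mp htf] with z hz
    simp [hz]
  rcases eq_or_ne hg.order ⊤ with htg | htg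
  · rw [htg, add_top, AnalyticAt.order_eq_top_iff]
    filter_upwards [hg.order_eq_top_iff.mp htg] with z hz
    simp [hz]
  obtain ⟨n, hn⟩ := BD.exists_nat _ htf
  obtain ⟨m, hm⟩ := BD.exists_nat _ htg
  obtain ⟨u, hu, hu0, hfu⟩ := (hf.order_eq_nat_iff n).mp hn
  obtain ⟨w, hw, hw0, hgw⟩ := (hg.order_eq_nat_iff m).mp hm
  have hcast : ((n + m : ℕ) : ℕ∞) = hf.order + hg.order := by
    rw [hn, hm]; exact Nat.cast_add n m
  rw [← hcast, (hf.mul hg).order_eq_nat_iff]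
  refine ⟨fun z => u z * w z, hu.mul hw, mul_ne_zero hu0 hw0, ?_⟩
  filter_upwards [hfu, hgw] with z h1 h2
  rw [Pi.mul_apply, h1, h2]; simp [smul_eq_mul]; ring

-- order of a sum ≥ min
lemma BD.min_le_order_add {f g : ℂ → ℂ} (hf : AnalyticAt ℂ f 0) (hg : AnalyticAt ℂ g 0) :
    min hf.order hg.order ≤ (hf.add hg).order := by
  rcases eq_or_ne (min hf.order hg.order) ⊤ with ht | ht
  · rw [min_eq_top] at ht
    rw [ht.1, ht.2, min_self, top_le_iff, AnalyticAt.order_eq_top_iff]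
    filter_upwards [hf.order_eq_top_iff.mp ht.1, hg.order_eq_top_iff.mp ht.2] with z h1 h2
    simp [h1, h2]
  obtain ⟨k, hk⟩ := BD.exists_nat _ ht
  obtain ⟨w1, hw1, hr1⟩ := BD.rep_of_le_order hf k (hk.ge.trans (min_le_left _ _))
  obtain ⟨w2, hw2, hr2⟩ := BD.rep_of_le_order hg k (hk.ge.trans (min_le_right _ _))
  rw [hk]
  refine BD.le_order_of_rep (hf.add hg) k (fun z => w1 z + w2 z) (hw1.add hw2) ?_
  filter_upwards [hr1, hr2] with z h1 h2
  simp [h1, h2]; ring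

-- order of sum when orders differ
lemma BD.order_add_of_lt {f g : ℂ → ℂ} (hf : AnalyticAt ℂ f 0) (hg : AnalyticAt ℂ g 0)
    (hlt : hf.order < hg.order) : (hf.add hg).order = hf.order := by
  obtain ⟨n, hn⟩ := BD.exists_nat _ (hlt.trans_le le_top).ne
  obtain ⟨u, hu, hu0, hfu⟩ := (hf.order_eq_nat_iff n).mp hn
  have hge : ((n + 1 : ℕ) : ℕ∞) ≤ hg.order := by
    push_cast
    exact Order.add_one_le_of_lt (hn.symm.trans_lt hlt)
  obtain ⟨w, hw, hgw⟩ := BD.rep_of_le_order hg (n + 1) hge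
  rw [hn, (hf.add hg).order_eq_nat_iff]
  refine ⟨fun z => u z + z * w z, hu.add (analyticAt_id.mul hw), by simpa using hu0, ?_⟩
  filter_upwards [hfu, hgw] with z h1 h2
  simp only [Pi.add_apply, h1, h2, smul_eq_mul, sub_zero]; ring

-- key: smaller order dominates the limit
lemma BD.key {f g μ : ℂ → ℂ} {A B : ℂ} (hf : AnalyticAt ℂ f 0) (hg : AnalyticAt ℂ g 0)
    (hlt : hf.order < hg.order)
    (hA : Tendsto (fun z => μ z * f z) (𝓝[≠] (0:ℂ)) (𝓝 A))
    (hB : Tendsto (fun z => μ z * g z) (𝓝[≠] (0:ℂ)) (𝓝 B)) : B = 0 := by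
  obtain ⟨n, hn⟩ := BD.exists_nat _ (hlt.trans_le le_top).ne
  obtain ⟨u, hu, hu0, hfu⟩ := (hf.order_eq_nat_iff n).mp hn
  have hge : ((n + 1 : ℕ) : ℕ∞) ≤ hg.order := by
    push_cast
    exact Order.add_one_le_of_lt (hn.symm.trans_lt hlt)
  obtain ⟨w, hw, hgw⟩ := BD.rep_of_le_order hg (n + 1) hge
  have hune : ∀ᶠ z in 𝓝 (0:ℂ), u z ≠ 0 := hu.continuousAt.eventually_ne hu0
  have hev : ∀ᶠ z in 𝓝[≠] (0:ℂ),
      μ z * g z = (μ z * f z) * (z * w z / u z) := by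
    filter_upwards [eventually_nhdsWithin_of_eventually_nhds hfu,
      eventually_nhdsWithin_of_eventually_nhds hgw,
      eventually_nhdsWithin_of_eventually_nhds hune, self_mem_nhdsWithin] with z h1 h2 h3 hz
    rw [h1, h2, smul_eq_mul, sub_zero]
    field_simp
    ring
  have hphi : Tendsto (fun z : ℂ => z * w z / u z) (𝓝[≠] (0:ℂ)) (𝓝 0) := by
    have : Tendsto (fun z : ℂ => z * w z / u z) (𝓝 (0:ℂ)) (𝓝 (0 * w 0 / u 0)) :=
      (continuousAt_id.mul hw.continuousAt).div hu.continuousAt hu0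
    simpa using this.mono_left nhdsWithin_le_nhds
  have hB' : Tendsto (fun z => μ z * g z) (𝓝[≠] (0:ℂ)) (𝓝 (A * 0)) :=
    (hA.mul hphi).congr' (hev.mono fun z hz => hz.symm)
  simpa using (tendsto_nhds_unique hB hB').trans (mul_zero A)

-- if the limit is nonzero the order is finite
lemma BD.order_ne_top {g μ : ℂ → ℂ} {B : ℂ} (hg : AnalyticAt ℂ g 0) (hB0 : B ≠ 0)
    (hB : Tendsto (fun z => μ z * g z) (𝓝[≠] (0:ℂ)) (𝓝 B)) : hg.order ≠ ⊤ := by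
  intro ht
  have hz : ∀ᶠ z in 𝓝[≠] (0:ℂ), μ z * g z = 0 := by
    filter_upwards [eventually_nhdsWithin_of_eventually_nhds (hg.order_eq_top_iff.mp ht)] with z h
    simp [h]
  have : Tendsto (fun z => μ z * g z) (𝓝[≠] (0:ℂ)) (𝓝 0) :=
    tendsto_const_nhds.congr' (hz.mono fun z h => h.symm)
  exact hB0 (tendsto_nhds_unique hB this)

lemma BD.lt_add_of_one_le {a b : ℕ∞} (ha : a ≠ ⊤) (hb : 1 ≤ b) : a < a + b :=
  (ENat.add_one_le_iff ha).mp (add_le_add_right hb a)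

lemma BD.comp {f g h μ : ℂ → ℂ} {c : ℂ × ℂ × ℂ}
    (H : Tendsto (fun ε => μ ε • ((f ε, g ε, h ε) : ℂ × ℂ × ℂ)) (𝓝[≠] (0:ℂ)) (𝓝 c)) :
    Tendsto (fun ε => μ ε * f ε) (𝓝[≠] (0:ℂ)) (𝓝 c.1) ∧
    Tendsto (fun ε => μ ε * g ε) (𝓝[≠] (0:ℂ)) (𝓝 c.2.1) ∧
    Tendsto (fun ε => μ ε * h ε) (𝓝[≠] (0:ℂ)) (𝓝 c.2.2) := by
  have h1 := (continuous_fst.tendsto c).comp H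
  have h2 := ((continuous_fst.comp continuous_snd).tendsto c).comp H
  have h3 := ((continuous_snd.comp continuous_snd).tendsto c).comp H
  exact ⟨by simpa [Function.comp_def, Prod.smul_mk, smul_eq_mul] using h1,
    by simpa [Function.comp_def, Prod.smul_mk, smul_eq_mul] using h2,
    by simpa [Function.comp_def, Prod.smul_mk, smul_eq_mul] using h3⟩

/-- The exceptional divisor of the blow-up of the product of Bautin ideals
`𝓑₁ × 𝓑₂` is contained in the union of three components: if along an analytic
arc `ε ↦ λ(ε)`, `λ(0) = 0`, the normalized generator tuples
`μ(ε)·(λ₁, λ₃, λ₂λ₅)` and `ν(ε)·(λ₁+λ₃+λ₁λ₂, λ₅, λ₃λ₄)` converge to nonzero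
vectors `c¹, c²`, then (i) `c₁² = c₃² = 0`, or (ii) `c₁¹ + c₂¹ = 0 ∧ c₃¹ = 0`,
or (iii) `c₃¹ = c₃² = 0`. -/
theorem exceptional_divisor_components
    (l1 l2 l3 l4 l5 : ℂ → ℂ)
    (ha1 : AnalyticAt ℂ l1 0) (ha2 : AnalyticAt ℂ l2 0) (ha3 : AnalyticAt ℂ l3 0)
    (ha4 : AnalyticAt ℂ l4 0) (ha5 : AnalyticAt ℂ l5 0)
    (h01 : l1 0 = 0) (h02 : l2 0 = 0) (h03 : l3 0 = 0)
    (h04 : l4 0 = 0) (h05 : l5 0 = 0)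
    (c1 c2 : ℂ × ℂ × ℂ) (hc1 : c1 ≠ 0) (hc2 : c2 ≠ 0)
    (μ ν : ℂ → ℂ)
    (hμ : Tendsto (fun ε => μ ε • ((l1 ε, l3 ε, l2 ε * l5 ε) : ℂ × ℂ × ℂ))
      (nhdsWithin 0 {0}ᶜ) (nhds c1))
    (hν : Tendsto (fun ε => ν ε •
        ((l1 ε + l3 ε + l1 ε * l2 ε, l5 ε, l3 ε * l4 ε) : ℂ × ℂ × ℂ))
      (nhdsWithin 0 {0}ᶜ) (nhds c2)) :
    (c2.1 = 0 ∧ c2.2.2 = 0)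
    ∨ (c1.1 + c1.2.1 = 0 ∧ c1.2.2 = 0)
    ∨ (c1.2.2 = 0 ∧ c2.2.2 = 0) := by
  obtain ⟨t11, t13, t125⟩ := BD.comp hμ
  obtain ⟨t2L, t25, t234⟩ := BD.comp hν
  have a25 : AnalyticAt ℂ (fun z => l2 z * l5 z) 0 := ha2.mul ha5
  have a34 : AnalyticAt ℂ (fun z => l3 z * l4 z) 0 := ha3.mul ha4
  have a12 : AnalyticAt ℂ (fun z => l1 z * l2 z) 0 := ha1.mul ha2
  have aF : AnalyticAt ℂ (fun z => l1 z + l3 z) 0 := ha1.add ha3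
  have aL1 : AnalyticAt ℂ (fun z => l1 z + l3 z + l1 z * l2 z) 0 := aF.add a12
  have h1p : (1 : ℕ∞) ≤ ha2.order := BD.one_le_order ha2 h02
  have h1r : (1 : ℕ∞) ≤ ha4.order := BD.one_le_order ha4 h04
  have hmul25 : a25.order = ha2.order + ha5.order := BD.order_mul ha2 ha5
  have hmul34 : a34.order = ha3.order + ha4.order := BD.order_mul ha3 ha4
  have hmul12 : a12.order = ha1.order + ha2.order := BD.order_mul ha1 ha2
  by_cases h125 : c1.2.2 = 0
  · -- Case B
    by_cases hS : c1.1 + c1.2.1 = 0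
    · exact Or.inr (Or.inl ⟨hS, h125⟩)
    · refine Or.inr (Or.inr ⟨h125, ?_⟩)
      have tF : Tendsto (fun ε => μ ε * (l1 ε + l3 ε)) (𝓝[≠] (0:ℂ))
          (𝓝 (c1.1 + c1.2.1)) := by
        simpa [mul_add] using t11.add t13
      have hmtop : aF.order ≠ ⊤ := BD.order_ne_top aF hS tF
      have hma : aF.order ≤ ha1.order := by
        by_contra h
        push_neg at h
        exact hS (BD.key ha1 aF h t11 tF)
      have hmb : aF.order ≤ ha3.order := by
        by_contra h
        push_neg at h
        exact hS (BD.key ha3 aF h t13 tF)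
      have hlt12 : aF.order < a12.order := by
        rw [hmul12]
        exact lt_of_lt_of_le (BD.lt_add_of_one_le hmtop le_rfl)
          (add_le_add hma h1p)
      have hordL1 : aL1.order = aF.order := BD.order_add_of_lt aF a12 hlt12
      have hlt34 : aL1.order < a34.order := by
        rw [hordL1, hmul34]
        exact lt_of_lt_of_le (BD.lt_add_of_one_le hmtop le_rfl)
          (add_le_add hmb h1r)
      exact BD.key aL1 a34 hlt34 t2L t234
  · -- Case A
    have hPtop : a25.order ≠ ⊤ := BD.order_ne_top a25 h125 t125
    have hqtop : ha5.order ≠ ⊤ := by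
      intro h
      exact hPtop (by rw [hmul25, h, add_top])
    have hPa : a25.order ≤ ha1.order := by
      by_contra h
      push_neg at h
      exact h125 (BD.key ha1 a25 h t11 t125)
    have hPb : a25.order ≤ ha3.order := by
      by_contra h
      push_neg at h
      exact h125 (BD.key ha3 a25 h t13 t125)
    have hqP : ha5.order < a25.order := by
      rw [hmul25, add_comm]
      exact BD.lt_add_of_one_le hqtop h1p
    have hlt34 : ha5.order < a34.order := by
      rw [hmul34]
      exact lt_of_lt_of_le hqP (hPb.trans le_self_add)
    have hltL1 : ha5.order < aL1.order := by
      have hFm : min aF.order a12.order ≤ aL1.order := BD.min_le_order_add aF a12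
      have hF2 : min ha1.order ha3.order ≤ aF.order := BD.min_le_order_add ha1 ha3
      have hqa : ha5.order < ha1.order := lt_of_lt_of_le hqP hPa
      have hqb : ha5.order < ha3.order := lt_of_lt_of_le hqP hPb
      have hqF : ha5.order < aF.order := lt_of_lt_of_le (lt_min hqa hqb) hF2
      have hq12 : ha5.order < a12.order := by
        rw [hmul12]
        exact lt_of_lt_of_le hqa le_self_add
      exact lt_of_lt_of_le (lt_min hqF hq12) hFm
    have e234 : c2.2.2 = 0 := BD.key ha5 a34 hlt34 t25 t234
    have e21 : c2.1 = 0 := BD.key ha5 aL1 hltL1 t25 t2L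
    exact Or.inl ⟨e21, e234⟩
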